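/- arXiv:1703.05346 — 2 statements merged into one kernel-verified Lean document; each statement's English description precedes it below -/
import Mathlib

section
/- Fix n ≥ 1 and y^n ∈ 𝕐^n, and let q_Y = p_{y^n} be the empirical type of y^n. Let q be any joint probability distribution on 𝕏 × 𝕐 whose 𝕐-marginal equals q_Y. If Z^n = (Z_1,…,Z_n) is an i.i.d. sequence with per-letter distribution p_X, then the probability that the joint type of (Z^n, y^n) equals q satisfies Pr( p_{(Z^n,y^n)} = q ) ≤ 2^{ − n · D( q ‖ p_X × q_Y ) }, where p_X × q_Y denotes the product distribution (x,y) ↦ p_X(x) q_Y(y). -/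
open Finset Filter
open scoped Classical

/-- A probability distribution on a finite type, as a real-valued mass function. -/
def IsDist {α : Type} [Fintype α] (p : α → ℝ) : Prop :=
  (∀ a, 0 ≤ p a) ∧ ∑ a, p a = 1

/-- The i.i.d. (product) distribution of `n` letters, each with per-letter distribution `p`. -/
noncomputable def iid {X : Type} (p : X → ℝ) (n : ℕ) (xs : Fin n → X) : ℝ :=
  ∏ i, p (xs i)

/-- The additive `n`-letter distortion `d^n(x^n, y^n) = ∑ i, d (x^n i) (y^n i)`. -/
noncomputable def dn {X Y : Type} (d : X → Y → ℝ) (n : ℕ) (xs : Fin n → X) (ys : Fin n → Y) : ℝ :=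
  ∑ i, d (xs i) (ys i)

/-- A general channel: for each block-length `n`, a transition kernel from `𝕏^n` to `𝕐^n`. -/
def Channel (X Y : Type) : Type := ∀ n : ℕ, (Fin n → X) → (Fin n → Y) → ℝ

/-- `c` is a genuine channel: every row is a probability distribution. -/
def IsChannel {X Y : Type} [Fintype X] [Fintype Y] (c : Channel X Y) : Prop :=
  ∀ (n : ℕ) (xs : Fin n → X), IsDist (c n xs)

/-- `Pr((1/n) d^n(X^n, Y^n) > D)` when the i.i.d. `p` source is the input to `c`
(stated with the inequality multiplied through by `n`). -/
noncomputable def probExcess {X Y : Type} [Fintype X] [Fintype Y] (p : X → ℝ)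
    (c : Channel X Y) (d : X → Y → ℝ) (D : ℝ) (n : ℕ) : ℝ :=
  ∑ xs : Fin n → X, ∑ ys : Fin n → Y,
    if (n : ℝ) * D < dn d n xs ys then iid p n xs * c n xs ys else 0

/-- The set `A` of general channels directly communicates the i.i.d. `p` source within
distortion `D`: the probability of excess distortion is bounded by a vanishing sequence `ω`,
uniformly over `c ∈ A`. -/
def DirectlyCommunicates {X Y : Type} [Fintype X] [Fintype Y] (A : Set (Channel X Y))
    (p : X → ℝ) (d : X → Y → ℝ) (D : ℝ) : Prop :=
  ∃ ω : ℕ → ℝ, Tendsto ω atTop (nhds 0) ∧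
    ∀ c ∈ A, ∀ n : ℕ, 1 ≤ n → probExcess p c d D n ≤ ω n

/-- The number `2 ^ ⌊nR⌋` of messages at block-length `n` and rate `R`. -/
noncomputable def msgCount (R : ℝ) (n : ℕ) : ℕ := 2 ^ ⌊(n : ℝ) * R⌋₊

/-- A deterministic rate-`R` block-length-`n` channel code over a channel with input space `I`
and output space `O`: an encoder from messages to `I^n` and a decoder from `O^n` to
messages-or-error (`Option`, with `none` playing the role of the error symbol). -/
abbrev ChCode (I O : Type) (R : ℝ) (n : ℕ) : Type :=
  (Fin (msgCount R n) → Fin n → I) × ((Fin n → O) → Option (Fin (msgCount R n)))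

/-- The probability that the decoder output differs from the message `m`, over the randomness
`κ` of the code and the channel noise. -/
noncomputable def errProb {I O : Type} [Fintype I] [Fintype O] [DecidableEq O]
    (R : ℝ) (n : ℕ) (κ : ChCode I O R n → ℝ) (c : Channel I O) (m : Fin (msgCount R n)) : ℝ :=
  ∑ ef : ChCode I O R n, ∑ ys : Fin n → O,
    if ef.2 ys ≠ some m then κ ef * c n (ef.1 m) ys else 0

/-- Rate `R` is reliably achievable over the set of channels `A` with random codes: a single
random rate-`R` code (a distribution `κ n` on deterministic codes for each `n`) whose
per-message error probability is bounded by a vanishing sequence `δ`, uniformly over `c ∈ A`. -/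
def ReliablyAchievable {I O : Type} [Fintype I] [Fintype O] [DecidableEq O]
    (A : Set (Channel I O)) (R : ℝ) : Prop :=
  ∃ κ : ∀ n : ℕ, ChCode I O R n → ℝ,
    (∀ n, IsDist (κ n)) ∧
    ∃ δ : ℕ → ℝ, Tendsto δ atTop (nhds 0) ∧
      ∀ c ∈ A, ∀ n : ℕ, 1 ≤ n → ∀ m : Fin (msgCount R n), errProb R n (κ n) c m ≤ δ n

/-- The `𝕏`-marginal of a joint distribution on `𝕏 × 𝕐`. -/
noncomputable def margX {X Y : Type} [Fintype X] [Fintype Y] (q : X × Y → ℝ) (x : X) : ℝ :=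
  ∑ y, q (x, y)

/-- The `𝕐`-marginal of a joint distribution on `𝕏 × 𝕐`. -/
noncomputable def margY {X Y : Type} [Fintype X] [Fintype Y] (q : X × Y → ℝ) (y : Y) : ℝ :=
  ∑ x, q (x, y)

/-- The mutual information `I(q) = ∑ q(x,y) log₂ (q(x,y) / (q_Z(x) q_Y(y)))` of a joint
distribution `q` (the convention `0 log 0 = 0` holds automatically since `0 * x = 0`). -/
noncomputable def mutualInfo {X Y : Type} [Fintype X] [Fintype Y] (q : X × Y → ℝ) : ℝ :=
  ∑ z : X × Y, q z * Real.logb 2 (q z / (margX q z.1 * margY q z.2))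

/-- The information-theoretic rate-distortion function `R^I_p(D)`: the infimum (in `EReal`,
so that the infimum over the empty set is `+∞`) of `I(q)` over joint distributions `q` with
`𝕏`-marginal `p` and expected distortion at most `D`. -/
noncomputable def RDF {X Y : Type} [Fintype X] [Fintype Y]
    (p : X → ℝ) (d : X → Y → ℝ) (D : ℝ) : EReal :=
  ⨅ q ∈ {q : X × Y → ℝ |
      IsDist q ∧ (∀ x, margX q x = p x) ∧ ∑ z : X × Y, q z * d z.1 z.2 ≤ D},
    (mutualInfo q : EReal)

/-- The Kullback–Leibler divergence `D(q‖r) = ∑ q(a) log₂ (q(a)/r(a))` (base-2, with the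
convention `0 log 0 = 0`), equal to `+∞` when `q` is not absolutely continuous with respect
to `r`. -/
noncomputable def klDiv {α : Type} [Fintype α] (q r : α → ℝ) : EReal :=
  if ∀ a, r a = 0 → q a = 0 then ((∑ a, q a * Real.logb 2 (q a / r a) : ℝ) : EReal) else ⊤

/-- The empirical type of a sequence `xs ∈ α^n`. -/
noncomputable def empDist {α : Type} [DecidableEq α] {n : ℕ} (xs : Fin n → α) (a : α) : ℝ :=
  ((Finset.univ.filter fun i => xs i = a).card : ℝ) / n

/-- The joint type of a pair of sequences `(zs, ys) ∈ 𝕏^n × 𝕐^n`. -/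
noncomputable def jointType {X Y : Type} [DecidableEq X] [DecidableEq Y] {n : ℕ}
    (zs : Fin n → X) (ys : Fin n → Y) : X × Y → ℝ :=
  empDist (fun i => (zs i, ys i))

/-- `2 ^ (-n·x)` for an extended-real exponent `x ∈ [0, ∞]`, with `2^(-n·∞)` interpreted
as `0`. -/
noncomputable def twoPowNegMul (n : ℕ) (x : EReal) : ℝ :=
  if x = ⊤ then 0 else (2 : ℝ) ^ (-(n : ℝ) * x.toReal)

private lemma rpow_sum_aux {ι : Type*} (s : Finset ι) (f : ι → ℝ) :
    (2 : ℝ) ^ (∑ i ∈ s, f i) = ∏ i ∈ s, (2 : ℝ) ^ f i := by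
  induction s using Finset.cons_induction with
  | empty => simp
  | cons a s ha ih =>
      rw [Finset.sum_cons, Finset.prod_cons, Real.rpow_add two_pos, ih]

/-- Fix `n ≥ 1` and `y^n ∈ 𝕐^n` with empirical type `q_Y`. For any joint
distribution `q` on `𝕏 × 𝕐` whose `𝕐`-marginal is `q_Y`, if `Z^n` is i.i.d. with per-letter
distribution `p_X`, then `Pr(p_{(Z^n, y^n)} = q) ≤ 2 ^ (−n · D(q ‖ p_X × q_Y))` (interpreted
as `0` when the divergence is `+∞`). -/
theorem stmt6 {X Y : Type} [Fintype X] [Fintype Y] [Nonempty X] [Nonempty Y]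
    [DecidableEq X] [DecidableEq Y]
    (p : X → ℝ) (hp : IsDist p)
    (n : ℕ) (hn : 1 ≤ n) (yn : Fin n → Y)
    (q : X × Y → ℝ) (hq : IsDist q) (hqY : ∀ y, margY q y = empDist yn y) :
    (∑ zn : Fin n → X, if jointType zn yn = q then iid p n zn else 0)
      ≤ twoPowNegMul n (klDiv q (fun z : X × Y => p z.1 * empDist yn z.2)) := by
  set r : X × Y → ℝ := fun z : X × Y => p z.1 * empDist yn z.2 with hrdef
  have hn0 : (0:ℝ) < n := by exact_mod_cast hn
  have hemp : ∀ y, 0 ≤ empDist yn y := fun y => div_nonneg (Nat.cast_nonneg _) hn0.le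
  -- margY q y ≥ q (x, y)
  have hmarg_ge : ∀ z : X × Y, q z ≤ margY q z.2 := by
    intro z
    have : q (z.1, z.2) ≤ ∑ x, q (x, z.2) :=
      Finset.single_le_sum (fun x _ => hq.1 (x, z.2)) (Finset.mem_univ z.1)
    simpa [margY] using this
  by_cases hac : ∀ z : X × Y, r z = 0 → q z = 0
  · -- absolutely continuous case
    set S : ℝ := ∑ z : X × Y, q z * Real.logb 2 (q z / r z) with hSdef
    have hkl : klDiv q r = (S : EReal) := by rw [klDiv, if_pos hac]
    have hRHS : twoPowNegMul n (klDiv q r) = (2:ℝ) ^ (-(n:ℝ) * S) := by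
      rw [hkl, twoPowNegMul, if_neg (EReal.coe_ne_top S), EReal.toReal_coe]
    set C : ℝ := (2:ℝ) ^ (-(n:ℝ) * S) with hCdef
    have hC0 : 0 < C := Real.rpow_pos_of_pos two_pos _
    -- the auxiliary conditional distribution w
    set w : X × Y → ℝ := fun z =>
      if empDist yn z.2 = 0 then (Fintype.card X : ℝ)⁻¹ else q z / empDist yn z.2 with hwdef
    have hw0 : ∀ z, 0 ≤ w z := by
      intro z
      by_cases h : empDist yn z.2 = 0
      · simp [hwdef, h]
      · simp only [hwdef, if_neg h]
        exact div_nonneg (hq.1 z) (hemp z.2)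
    have hwsum : ∀ y : Y, ∑ x, w (x, y) = 1 := by
      intro y
      by_cases h : empDist yn y = 0
      · have hw1 : ∀ x : X, w (x, y) = (Fintype.card X : ℝ)⁻¹ := fun x => by
          simp only [hwdef]; exact if_pos h
        rw [Finset.sum_congr rfl fun x _ => hw1 x, Finset.sum_const,
          Finset.card_univ, nsmul_eq_mul]
        have : (0:ℝ) < Fintype.card X := by
          exact_mod_cast Fintype.card_pos
        field_simp
      · simp only [hwdef, if_neg h]
        rw [← Finset.sum_div]
        have : ∑ x, q (x, y) = empDist yn y := by
          simpa [margY] using hqY y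
        rw [this, div_self h]
    have hsum1 : ∑ zn : Fin n → X, ∏ i, w (zn i, yn i) = 1 := by
      have := Finset.prod_univ_sum (fun _ : Fin n => (Finset.univ : Finset X))
        (fun i x => w (x, yn i))
      rw [Fintype.piFinset_univ] at this
      rw [← this]
      simp [hwsum]
    -- the key pointwise identity
    have key : ∀ zn : Fin n → X, jointType zn yn = q →
        iid p n zn = C * ∏ i, w (zn i, yn i) := by
      intro zn h
      set g : Fin n → X × Y := fun i => (zn i, yn i) with hgdef
      set c : X × Y → ℕ := fun z => (Finset.univ.filter fun i => g i = z).card with hcdef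
      have hcq : ∀ z, (c z : ℝ) = n * q z := by
        intro z
        have hz : q z = (c z : ℝ) / n := by
          rw [← h]; rfl
        rw [hz]; field_simp
      have P1 : iid p n zn = ∏ z : X × Y, (p z.1) ^ (c z) := by
        have := Finset.prod_fiberwise' (Finset.univ : Finset (Fin n)) g
          (fun z : X × Y => p z.1)
        rw [iid, ← this]
        exact (Finset.prod_congr rfl fun z _ => by
          rw [Finset.prod_const]).symm
      have P2 : ∏ i, w (zn i, yn i) = ∏ z : X × Y, (w z) ^ (c z) := by
        have := Finset.prod_fiberwise' (Finset.univ : Finset (Fin n)) g w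
        rw [show (∏ i, w (zn i, yn i)) = ∏ i, w (g i) from rfl, ← this]
        exact Finset.prod_congr rfl fun z _ => by rw [Finset.prod_const]
      have hCprod : C = ∏ z : X × Y,
          (2:ℝ) ^ (-(n:ℝ) * (q z * Real.logb 2 (q z / r z))) := by
        rw [hCdef, hSdef, Finset.mul_sum, rpow_sum_aux]
      rw [P1, P2, hCprod, ← Finset.prod_mul_distrib]
      refine Finset.prod_congr rfl fun z _ => ?_
      by_cases hc : c z = 0
      · have hqz : q z = 0 := by
          have := hcq z
          rw [hc] at this
          simp only [Nat.cast_zero] at this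
          nlinarith
        simp [hc, hqz]
      · -- c z > 0
        have hqz : 0 < q z := by
          have := hcq z
          have hcz : (0:ℝ) < (c z : ℝ) := by
            exact_mod_cast Nat.pos_of_ne_zero hc
          nlinarith
        have hqY' : 0 < empDist yn z.2 := by
          have := hmarg_ge z
          rw [hqY z.2] at this
          linarith
        have hrz : 0 < r z := by
          rcases lt_or_eq_of_le (mul_nonneg (hp.1 z.1) (hemp z.2)) with h' | h'
          · exact h'
          · exact absurd (hac z h'.symm) (ne_of_gt hqz)
        have hpz : 0 < p z.1 := by
          rcases lt_or_eq_of_le (hp.1 z.1) with h' | h'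
          · exact h'
          · exfalso
            have : r z = 0 := by rw [hrdef]; simp [← h']
            exact absurd this (ne_of_gt hrz)
        have hwz : w z = q z / empDist yn z.2 := by
          rw [hwdef]; simp [ne_of_gt hqY']
        -- exponent rewrite
        have hexp : -(n:ℝ) * (q z * Real.logb 2 (q z / r z))
            = Real.logb 2 (r z / q z) * (c z : ℝ) := by
          rw [hcq z, Real.logb_div (ne_of_gt hrz) (ne_of_gt hqz),
            Real.logb_div (ne_of_gt hqz) (ne_of_gt hrz)]
          ring
        rw [hexp, Real.rpow_mul (by norm_num : (0:ℝ) ≤ 2),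
          Real.rpow_logb two_pos (by norm_num) (div_pos hrz hqz),
          Real.rpow_natCast, hwz, ← mul_pow]
        congr 1
        have hr' : r z = p z.1 * empDist yn z.2 := rfl
        rw [hr']
        field_simp
    -- assemble
    rw [hRHS]
    calc (∑ zn : Fin n → X, if jointType zn yn = q then iid p n zn else 0)
        ≤ ∑ zn : Fin n → X, C * ∏ i, w (zn i, yn i) := by
          refine Finset.sum_le_sum fun zn _ => ?_
          by_cases h : jointType zn yn = q
          · rw [if_pos h, key zn h]
          · rw [if_neg h]
            exact mul_nonneg hC0.le (Finset.prod_nonneg fun i _ => hw0 _)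
      _ = C := by rw [← Finset.mul_sum, hsum1, mul_one]
  · -- not absolutely continuous: RHS is 0, LHS is 0
    have hRHS : twoPowNegMul n (klDiv q r) = 0 := by
      rw [klDiv, if_neg hac, twoPowNegMul, if_pos rfl]
    rw [hRHS]
    push_neg at hac
    obtain ⟨z0, hz0r, hz0q⟩ := hac
    have hq0 : 0 < q z0 := lt_of_le_of_ne (hq.1 z0) (Ne.symm hz0q)
    apply le_of_eq
    refine Finset.sum_eq_zero fun zn _ => ?_
    by_cases h : jointType zn yn = q
    · rw [if_pos h]
      -- q z0 > 0 forces some index i with (zn i, yn i) = z0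
      have hz : q z0 = ((Finset.univ.filter fun i => (zn i, yn i) = z0).card : ℝ) / n := by
        rw [← h]; rfl
      have hcne : (Finset.univ.filter fun i => (zn i, yn i) = z0).card ≠ 0 := by
        intro hc
        rw [hc] at hz
        simp at hz
        exact absurd hz (ne_of_gt hq0)
      have : ∃ i : Fin n, (zn i, yn i) = z0 := by
        obtain ⟨i, hi⟩ := Finset.card_pos.mp (Nat.pos_of_ne_zero hcne)
        exact ⟨i, (Finset.mem_filter.mp hi).2⟩
      obtain ⟨i, hi⟩ := this
      -- empDist yn z0.2 > 0, so p z0.1 = 0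
      have hqY' : 0 < empDist yn z0.2 := by
        have := hmarg_ge z0
        rw [hqY z0.2] at this
        linarith
      have hp0 : p z0.1 = 0 := by
        have hrz : p z0.1 * empDist yn z0.2 = 0 := hz0r
        rcases mul_eq_zero.mp hrz with h' | h'
        · exact h'
        · exact absurd h' (ne_of_gt hqY')
      rw [iid]
      refine Finset.prod_eq_zero (Finset.mem_univ i) ?_
      rw [show zn i = z0.1 from congrArg Prod.fst hi, hp0]
    · rw [if_neg h]
end

section
/- Fix D ≥ 0 such that R^I_{p_X}(D) is finite. Then lim_{ε → 0⁺} inf { R^I_{p'}(D) : p' a probability distribution on 𝕏 with Σ_x |p'(x) − p_X(x)| ≤ ε } = R^I_{p_X}(D); equivalently, for every δ > 0 there exists ε > 0 such that every probability distribution p' on 𝕏 with Σ_x |p'(x) − p_X(x)| ≤ ε satisfies R^I_{p'}(D) ≥ R^I_{p_X}(D) − δ. -/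
open Finset Filter
open scoped Classical

/-- A globally continuous expression for mutual information. -/
noncomputable def mutualInfoAux {X Y : Type} [Fintype X] [Fintype Y] (q : X × Y → ℝ) : ℝ :=
  (∑ z : X × Y, q z * Real.log (q z) - ∑ x, margX q x * Real.log (margX q x)
    - ∑ y, margY q y * Real.log (margY q y)) / Real.log 2

lemma continuous_margX {X Y : Type} [Fintype X] [Fintype Y] (x : X) :
    Continuous (fun q : X × Y → ℝ => margX q x) := by
  unfold margX
  exact continuous_finset_sum _ fun y _ => continuous_apply _

lemma continuous_margY {X Y : Type} [Fintype X] [Fintype Y] (y : Y) :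
    Continuous (fun q : X × Y → ℝ => margY q y) := by
  unfold margY
  exact continuous_finset_sum _ fun x _ => continuous_apply _

lemma continuous_mutualInfoAux {X Y : Type} [Fintype X] [Fintype Y] :
    Continuous (fun q : X × Y → ℝ => mutualInfoAux q) := by
  unfold mutualInfoAux
  apply Continuous.div_const
  apply Continuous.sub
  apply Continuous.sub
  · exact continuous_finset_sum _ fun z _ => Real.continuous_mul_log.comp (continuous_apply z)
  · exact continuous_finset_sum _ fun x _ => Real.continuous_mul_log.comp (continuous_margX x)
  · exact continuous_finset_sum _ fun y _ => Real.continuous_mul_log.comp (continuous_margY y)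

lemma mutualInfo_eq_aux {X Y : Type} [Fintype X] [Fintype Y] (q : X × Y → ℝ)
    (hq : ∀ z, 0 ≤ q z) : mutualInfo q = mutualInfoAux q := by
  have key : ∀ z : X × Y, q z * Real.log (q z / (margX q z.1 * margY q z.2)) =
      q z * Real.log (q z) - q z * Real.log (margX q z.1) - q z * Real.log (margY q z.2) := by
    intro z
    rcases eq_or_lt_of_le (hq z) with h | h
    · simp [← h]
    · have hX : 0 < margX q z.1 := by
        refine lt_of_lt_of_le h ?_
        have : q (z.1, z.2) ≤ ∑ y, q (z.1, y) :=
          Finset.single_le_sum (fun i _ => hq _) (Finset.mem_univ z.2)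
        simpa [margX] using this
      have hY : 0 < margY q z.2 := by
        refine lt_of_lt_of_le h ?_
        have : q (z.1, z.2) ≤ ∑ x, q (x, z.2) :=
          Finset.single_le_sum (f := fun x => q (x, z.2)) (fun i _ => hq _) (Finset.mem_univ z.1)
        simpa [margY] using this
      rw [Real.log_div h.ne' (mul_pos hX hY).ne', Real.log_mul hX.ne' hY.ne']
      ring
  have hB : ∑ z : X × Y, q z * Real.log (margX q z.1)
      = ∑ x, margX q x * Real.log (margX q x) := by
    rw [Fintype.sum_prod_type]
    refine Finset.sum_congr rfl fun x _ => ?_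
    show ∑ y, q (x, y) * Real.log (margX q x) = _
    rw [← Finset.sum_mul]
    rfl
  have hC : ∑ z : X × Y, q z * Real.log (margY q z.2)
      = ∑ y, margY q y * Real.log (margY q y) := by
    rw [Fintype.sum_prod_type_right]
    refine Finset.sum_congr rfl fun y _ => ?_
    show ∑ x, q (x, y) * Real.log (margY q y) = _
    rw [← Finset.sum_mul]
    rfl
  unfold mutualInfo mutualInfoAux
  rw [← hB, ← hC]
  rw [← Finset.sum_sub_distrib, ← Finset.sum_sub_distrib, Finset.sum_div]
  refine Finset.sum_congr rfl fun z _ => ?_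
  rw [← key z, Real.logb, div_eq_mul_inv, div_eq_mul_inv]
  ring

/-- Lower semicontinuity of the rate-distortion function in the source distribution. -/
lemma rdf_lsc {X Y : Type} [Fintype X] [Fintype Y]
    (p : X → ℝ) (d : X → Y → ℝ) (D : ℝ) (r : ℝ) (hfin : RDF p d D = (r : EReal)) :
    ∀ δ : ℝ, 0 < δ → ∃ ε : ℝ, 0 < ε ∧
      ∀ p' : X → ℝ, IsDist p' → (∑ x, |p' x - p x|) ≤ ε →
        ((r - δ : ℝ) : EReal) ≤ RDF p' d D := by
  intro δ hδ
  by_contra hcon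
  push_neg at hcon
  choose P hP1 hP2 hP3 using fun n : ℕ => hcon (1 / (n + 1)) (by positivity)
  have hq : ∀ n : ℕ, ∃ q : X × Y → ℝ,
      (IsDist q ∧ (∀ x, margX q x = P n x) ∧ ∑ z : X × Y, q z * d z.1 z.2 ≤ D) ∧
      mutualInfo q < r - δ := by
    intro n
    have h := hP3 n
    rw [RDF] at h
    obtain ⟨q, hq⟩ := iInf_lt_iff.mp h
    obtain ⟨hmem, hlt⟩ := iInf_lt_iff.mp hq
    exact ⟨q, hmem, by exact_mod_cast hlt⟩
  choose Q hQmem hQlt using hq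
  -- the sequence lives in the compact cube [0,1]^(X×Y)
  have hmemK : ∀ n, Q n ∈ Set.Icc (0 : X × Y → ℝ) 1 := by
    intro n
    constructor
    · intro z; exact (hQmem n).1.1 z
    · intro z
      have h1 : Q n z ≤ ∑ w : X × Y, Q n w :=
        Finset.single_le_sum (fun i _ => (hQmem n).1.1 i) (Finset.mem_univ z)
    -- sum equals 1
      simpa [(hQmem n).1.2] using h1
  obtain ⟨qs, hqsK, φ, hφ, hconv⟩ := (isCompact_Icc :
    IsCompact (Set.Icc (0 : X × Y → ℝ) 1)).tendsto_subseq hmemK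
  have hconvz : ∀ z : X × Y, Tendsto (fun n => Q (φ n) z) atTop (nhds (qs z)) := by
    intro z
    exact tendsto_pi_nhds.mp hconv z
  have hqs_nonneg : ∀ z, 0 ≤ qs z := fun z => hqsK.1 z
  have hqs_sum : ∑ z : X × Y, qs z = 1 := by
    have h1 : Tendsto (fun n => ∑ z : X × Y, Q (φ n) z) atTop (nhds (∑ z : X × Y, qs z)) :=
      tendsto_finset_sum _ fun z _ => hconvz z
    have h2 : (fun n => ∑ z : X × Y, Q (φ n) z) = fun _ => (1 : ℝ) :=
      funext fun n => (hQmem (φ n)).1.2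
    rw [h2] at h1
    exact tendsto_nhds_unique h1 tendsto_const_nhds
  have hPx : ∀ x : X, Tendsto (fun n => P n x) atTop (nhds (p x)) := by
    intro x
    rw [tendsto_iff_dist_tendsto_zero]
    have habs : ∀ n : ℕ, dist (P n x) (p x) ≤ 1 / (n + 1) := by
      intro n
      rw [Real.dist_eq]
      refine le_trans ?_ (hP2 n)
      exact Finset.single_le_sum (f := fun x => |P n x - p x|) (fun i _ => abs_nonneg _) (Finset.mem_univ x)
    exact squeeze_zero (fun n => dist_nonneg) habs tendsto_one_div_add_atTop_nhds_zero_nat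
  have hqs_marg : ∀ x, margX qs x = p x := by
    intro x
    have h1 : Tendsto (fun n => margX (Q (φ n)) x) atTop (nhds (margX qs x)) :=
      tendsto_finset_sum _ fun y _ => hconvz (x, y)
    have h2 : (fun n => margX (Q (φ n)) x) = fun n => P (φ n) x :=
      funext fun n => (hQmem (φ n)).2.1 x
    rw [h2] at h1
    exact tendsto_nhds_unique h1 ((hPx x).comp hφ.tendsto_atTop)
  have hqs_dist : ∑ z : X × Y, qs z * d z.1 z.2 ≤ D := by
    have h1 : Tendsto (fun n => ∑ z : X × Y, Q (φ n) z * d z.1 z.2) atTop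
        (nhds (∑ z : X × Y, qs z * d z.1 z.2)) :=
      tendsto_finset_sum _ fun z _ => (hconvz z).mul_const _
    exact le_of_tendsto h1 (Filter.Eventually.of_forall fun n => (hQmem (φ n)).2.2)
  have hqs_mi : mutualInfo qs ≤ r - δ := by
    have h1 : Tendsto (fun n => mutualInfoAux (Q (φ n))) atTop (nhds (mutualInfoAux qs)) :=
      (continuous_mutualInfoAux.tendsto qs).comp hconv
    rw [mutualInfo_eq_aux qs hqs_nonneg]
    refine le_of_tendsto h1 (Filter.Eventually.of_forall fun n => ?_)
    rw [← mutualInfo_eq_aux (Q (φ n)) (hQmem (φ n)).1.1]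
    exact (hQlt (φ n)).le
  have hfinal : RDF p d D ≤ ((mutualInfo qs : ℝ) : EReal) :=
    iInf₂_le qs ⟨⟨hqs_nonneg, hqs_sum⟩, hqs_marg, hqs_dist⟩
  rw [hfin] at hfinal
  have : r ≤ mutualInfo qs := EReal.coe_le_coe_iff.mp hfinal
  linarith

/-- Fix `D ≥ 0` such that `R^I_{p_X}(D)` is finite, say equal to the real
number `r`. Then `inf { R^I_{p'}(D) : ∑ |p'(x) − p_X(x)| ≤ ε }` tends to `R^I_{p_X}(D)` as
`ε → 0⁺`; equivalently, for every `δ > 0` there is `ε > 0` such that every distribution `p'`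
on `𝕏` with `∑ |p'(x) − p_X(x)| ≤ ε` satisfies `R^I_{p'}(D) ≥ R^I_{p_X}(D) − δ`. -/
theorem stmt10 {X Y : Type} [Fintype X] [Fintype Y] [Nonempty X] [Nonempty Y]
    (p : X → ℝ) (hp : IsDist p)
    (d : X → Y → ℝ) (hd : ∀ x y, 0 ≤ d x y)
    (D : ℝ) (hD : 0 ≤ D)
    (r : ℝ) (hfin : RDF p d D = (r : EReal)) :
    Filter.Tendsto
        (fun ε : ℝ =>
          ⨅ p' ∈ {p' : X → ℝ | IsDist p' ∧ (∑ x, |p' x - p x|) ≤ ε}, RDF p' d D)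
        (nhdsWithin 0 (Set.Ioi 0)) (nhds (RDF p d D))
      ∧ ∀ δ : ℝ, 0 < δ → ∃ ε : ℝ, 0 < ε ∧
          ∀ p' : X → ℝ, IsDist p' → (∑ x, |p' x - p x|) ≤ ε →
            ((r - δ : ℝ) : EReal) ≤ RDF p' d D := by
  have key := rdf_lsc p d D r hfin
  refine ⟨?_, key⟩
  rw [hfin, tendsto_order]
  constructor
  · intro b hb
    obtain ⟨c, hbc, hcr⟩ := EReal.lt_iff_exists_real_btwn.mp hb
    have hδ : 0 < r - c := sub_pos.mpr (EReal.coe_lt_coe_iff.mp hcr)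
    obtain ⟨ε₀, hε₀, hk⟩ := key (r - c) hδ
    have hev : ∀ᶠ ε in nhdsWithin (0 : ℝ) (Set.Ioi 0), ε ∈ Set.Iio ε₀ :=
      mem_nhdsWithin_of_mem_nhds (Iio_mem_nhds hε₀)
    filter_upwards [hev] with ε hεlt
    have hle : ((r - (r - c) : ℝ) : EReal) ≤
        ⨅ p' ∈ {p' : X → ℝ | IsDist p' ∧ (∑ x, |p' x - p x|) ≤ ε}, RDF p' d D :=
      le_iInf₂ fun p' hp' => hk p' hp'.1 (hp'.2.trans hεlt.le)
    refine lt_of_lt_of_le hbc ?_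
    have : ((c : ℝ) : EReal) = ((r - (r - c) : ℝ) : EReal) := by norm_num
    rw [this]
    exact hle
  · intro b hb
    filter_upwards [self_mem_nhdsWithin] with ε hεpos
    have hmem : p ∈ {p' : X → ℝ | IsDist p' ∧ (∑ x, |p' x - p x|) ≤ ε} := by
      refine ⟨hp, ?_⟩
      simpa using (le_of_lt hεpos)
    have h1 : (⨅ p' ∈ {p' : X → ℝ | IsDist p' ∧ (∑ x, |p' x - p x|) ≤ ε}, RDF p' d D)
        ≤ RDF p d D := iInf₂_le p hmem
    rw [hfin] at h1
    exact lt_of_le_of_lt h1 hb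
end
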